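/- Let E₁,…,Eₙ,F be Banach spaces, n ≥ 2, q ≥ 1, r > 0, and p₁,…,p_{n−1} ∈ (0,∞]. Suppose there is a constant C > 0 such that every continuous linear mapping u : Eₙ → F satisfies (∑_j ‖u(y_j)‖^q)^{1/q} ≤ C·‖u‖·‖(y_j)‖_{w,r} for every (y_j) ∈ ℓ_r^w(Eₙ). If T : E₁×⋯×Eₙ → F is a continuous n-linear mapping that is absolutely (q;p₁,…,p_{n−1},∞)-summing at the origin, then T is 2-fully (q;p₁,…,p_{n−1},r)-summing in the sense that ∑_{k=1}^∞ ∑_{j=1}^∞ ‖T(x_k^{(1)},…,x_k^{(n−1)}, y_j)‖^q < ∞ whenever (x_k^{(l)}) ∈ ℓ_{p_l}^w(E_l) for l = 1,…,n−1 and (y_j) ∈ ℓ_r^w(Eₙ). -/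

import Mathlib

open scoped ENNReal NNReal

noncomputable section

/-- A sequence `x` in `E` is weakly `q`-summable (`0 < q < ∞`), i.e. belongs to `ℓ_q^w(E)`:
`∑_j ‖φ (x j)‖^q < ∞` for every continuous linear functional `φ`. -/
def WeaklySummable (𝕜 : Type*) [RCLike 𝕜] {E : Type*} [NormedAddCommGroup E]
    [NormedSpace 𝕜 E] (q : ℝ) (x : ℕ → E) : Prop :=
  ∀ φ : E →L[𝕜] 𝕜, Summable fun j => ‖φ (x j)‖ ^ q

/-- Membership in `ℓ_q^w(E)` for `q ∈ (0,∞]`; for `q = ∞` this means boundedness. -/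
def MemWeakLp (𝕜 : Type*) [RCLike 𝕜] {E : Type*} [NormedAddCommGroup E]
    [NormedSpace 𝕜 E] (q : ℝ≥0∞) (x : ℕ → E) : Prop :=
  if q = ⊤ then ∃ M : ℝ, ∀ j, ‖x j‖ ≤ M
  else ∀ φ : E →L[𝕜] 𝕜, Summable fun j => ‖φ (x j)‖ ^ q.toReal

/-- Elementary inequality `(a+b)^r ≤ 2^r (a^r + b^r)` for nonnegative reals and `r ≥ 0`. -/
lemma aux_add_rpow_le {a b r : ℝ} (ha : 0 ≤ a) (hb : 0 ≤ b) (hr : 0 ≤ r) :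
    (a + b) ^ r ≤ 2 ^ r * (a ^ r + b ^ r) := by
  have h1 : a + b ≤ 2 * max a b := by
    rcases max_cases a b with ⟨h, h'⟩ | ⟨h, h'⟩ <;> rw [h] <;> linarith
  have h2 : (a + b) ^ r ≤ (2 * max a b) ^ r :=
    Real.rpow_le_rpow (by linarith) h1 hr
  have h3 : (2 * max a b) ^ r = 2 ^ r * (max a b) ^ r :=
    Real.mul_rpow (by norm_num) (le_max_of_le_left ha)
  have h4 : (max a b) ^ r ≤ a ^ r + b ^ r := by
    rcases max_cases a b with ⟨h, _⟩ | ⟨h, _⟩ <;> rw [h]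
    · nlinarith [Real.rpow_nonneg hb r]
    · nlinarith [Real.rpow_nonneg ha r]
  calc (a + b) ^ r ≤ 2 ^ r * (max a b) ^ r := h2.trans_eq h3
    _ ≤ 2 ^ r * (a ^ r + b ^ r) := by
        have : (0:ℝ) ≤ 2 ^ r := Real.rpow_nonneg (by norm_num) r
        nlinarith

/-- A weakly `r`-summable sequence has a uniform weak bound on the dual unit ball
(Baire category argument). -/
lemma exists_weak_bound {𝕜 : Type*} [RCLike 𝕜] {E : Type*} [NormedAddCommGroup E]
    [NormedSpace 𝕜 E] [CompleteSpace E] {r : ℝ} (hr : 0 < r) (y : ℕ → E)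
    (hy : WeaklySummable 𝕜 r y) :
    ∃ B : ℝ, ∀ φ : E →L[𝕜] 𝕜, ‖φ‖ ≤ 1 → (∑' j, ‖φ (y j)‖ ^ r) ^ (1 / r) ≤ B := by
  classical
  set S : ℕ → Set (E →L[𝕜] 𝕜) := fun n =>
    ⋂ s : Finset ℕ, {φ : E →L[𝕜] 𝕜 | ∑ j ∈ s, ‖φ (y j)‖ ^ r ≤ n} with hS
  have hcont : ∀ j : ℕ, Continuous fun φ : E →L[𝕜] 𝕜 => ‖φ (y j)‖ ^ r := fun j =>
    (((ContinuousLinearMap.apply 𝕜 𝕜 (y j)).continuous).norm).rpow_const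
      (fun _ => Or.inr hr.le)
  have hclosed : ∀ n, IsClosed (S n) := fun n =>
    isClosed_iInter fun s =>
      isClosed_le (continuous_finset_sum s fun j _ => hcont j) continuous_const
  have hcover : (⋃ n, S n) = Set.univ := by
    ext φ
    simp only [hS, Set.mem_iUnion, Set.mem_iInter, Set.mem_setOf_eq, Set.mem_univ, iff_true]
    refine ⟨⌈∑' j, ‖φ (y j)‖ ^ r⌉₊, fun s => ?_⟩
    exact (Summable.sum_le_tsum s (fun j _ => Real.rpow_nonneg (norm_nonneg _) r) (hy φ)).trans
      (Nat.le_ceil _)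
  have : BaireSpace (E →L[𝕜] 𝕜) := BaireSpace.of_completelyPseudoMetrizable
  obtain ⟨n, hn⟩ := nonempty_interior_of_iUnion_of_closed hclosed hcover
  obtain ⟨φ₀, hφ₀⟩ := hn
  rw [mem_interior_iff_mem_nhds, Metric.mem_nhds_iff] at hφ₀
  obtain ⟨ε, hε, hball⟩ := hφ₀
  -- every ψ with ‖ψ‖ < ε satisfies the bound 2^r * (2n)
  have key : ∀ ψ : E →L[𝕜] 𝕜, ‖ψ‖ < ε → ∑' j, ‖ψ (y j)‖ ^ r ≤ 2 ^ r * (2 * n) := by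
    intro ψ hψ
    have h1 : φ₀ + ψ ∈ S n := hball (by
      simp only [Metric.mem_ball, dist_eq_norm, add_sub_cancel_left]
      exact hψ)
    have h0 : φ₀ ∈ S n := hball (Metric.mem_ball_self hε)
    refine Summable.tsum_le_of_sum_le (hy ψ) fun s => ?_
    have hsum1 : ∑ j ∈ s, ‖(φ₀ + ψ) (y j)‖ ^ r ≤ n := Set.mem_iInter.1 h1 s
    have hsum0 : ∑ j ∈ s, ‖φ₀ (y j)‖ ^ r ≤ n := Set.mem_iInter.1 h0 s
    have hpt : ∀ j ∈ s, ‖ψ (y j)‖ ^ r ≤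
        2 ^ r * (‖(φ₀ + ψ) (y j)‖ ^ r + ‖φ₀ (y j)‖ ^ r) := by
      intro j _
      have hle : ‖ψ (y j)‖ ≤ ‖(φ₀ + ψ) (y j)‖ + ‖φ₀ (y j)‖ := by
        have : ψ (y j) = (φ₀ + ψ) (y j) - φ₀ (y j) := by simp
        rw [this]
        exact norm_sub_le _ _
      calc ‖ψ (y j)‖ ^ r ≤ (‖(φ₀ + ψ) (y j)‖ + ‖φ₀ (y j)‖) ^ r :=
            Real.rpow_le_rpow (norm_nonneg _) hle hr.le
        _ ≤ 2 ^ r * (‖(φ₀ + ψ) (y j)‖ ^ r + ‖φ₀ (y j)‖ ^ r) :=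
            aux_add_rpow_le (norm_nonneg _) (norm_nonneg _) hr.le
    calc ∑ j ∈ s, ‖ψ (y j)‖ ^ r
        ≤ ∑ j ∈ s, 2 ^ r * (‖(φ₀ + ψ) (y j)‖ ^ r + ‖φ₀ (y j)‖ ^ r) :=
          Finset.sum_le_sum hpt
      _ = 2 ^ r * (∑ j ∈ s, ‖(φ₀ + ψ) (y j)‖ ^ r + ∑ j ∈ s, ‖φ₀ (y j)‖ ^ r) := by
          rw [← Finset.mul_sum, Finset.sum_add_distrib]
      _ ≤ 2 ^ r * (2 * n) := by
          have h2r : (0:ℝ) ≤ 2 ^ r := Real.rpow_nonneg (by norm_num) r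
          nlinarith
  -- rescale: for ‖φ‖ ≤ 1, ‖(ε/2) • φ‖ < ε
  refine ⟨(2 ^ r * (2 * n) * (2 / ε) ^ r) ^ (1 / r), fun φ hφ => ?_⟩
  set c : 𝕜 := ((ε / 2 : ℝ) : 𝕜) with hc
  have hcnorm : ‖c‖ = ε / 2 := by
    rw [hc, RCLike.norm_ofReal, abs_of_pos (by linarith)]
  have hsmall : ‖c • φ‖ < ε := by
    rw [norm_smul c φ, hcnorm]
    calc ε / 2 * ‖φ‖ ≤ ε / 2 * 1 := by
          apply mul_le_mul_of_nonneg_left hφ (by linarith)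
      _ < ε := by linarith
  have hkey := key (c • φ) hsmall
  have heq : ∀ j, ‖(c • φ) (y j)‖ ^ r = (ε / 2) ^ r * ‖φ (y j)‖ ^ r := by
    intro j
    rw [ContinuousLinearMap.smul_apply, norm_smul, hcnorm,
      Real.mul_rpow (by linarith) (norm_nonneg _)]
  rw [show (fun j => ‖(c • φ) (y j)‖ ^ r) = fun j => (ε / 2) ^ r * ‖φ (y j)‖ ^ r from
    funext heq, tsum_mul_left] at hkey
  have hεr : (0:ℝ) < (ε / 2) ^ r := Real.rpow_pos_of_pos (by linarith) r
  have htsum : ∑' j, ‖φ (y j)‖ ^ r ≤ 2 ^ r * (2 * n) * (2 / ε) ^ r := by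
    have hmul : (2 / ε) ^ r * (ε / 2) ^ r = 1 := by
      rw [← Real.mul_rpow (by positivity) (by positivity),
        show (2 / ε) * (ε / 2) = 1 by field_simp, Real.one_rpow]
    calc ∑' j, ‖φ (y j)‖ ^ r
        = ((2 / ε) ^ r * (ε / 2) ^ r) * ∑' j, ‖φ (y j)‖ ^ r := by rw [hmul, one_mul]
      _ = (2 / ε) ^ r * ((ε / 2) ^ r * ∑' j, ‖φ (y j)‖ ^ r) := by ring
      _ ≤ (2 / ε) ^ r * (2 ^ r * (2 * n)) :=
          mul_le_mul_of_nonneg_left hkey (by positivity)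
      _ = 2 ^ r * (2 * n) * (2 / ε) ^ r := by ring
  exact Real.rpow_le_rpow (tsum_nonneg fun j => Real.rpow_nonneg (norm_nonneg _) r)
    htsum (by positivity)

/-- Let `n = m + 1 ≥ 2`, `q ≥ 1`, `r > 0`, `p₁,…,p_{n−1} ∈ (0,∞]`. Suppose
there is `C > 0` such that every continuous linear `u : Eₙ → F` satisfies
`(∑_j ‖u y_j‖^q)^{1/q} ≤ C ‖u‖ ‖(y_j)‖_{w,r}` for every `(y_j) ∈ ℓ_r^w(Eₙ)`. If a continuous
`n`-linear `T : E₁ × ⋯ × Eₙ → F` is absolutely `(q;p₁,…,p_{n−1},∞)`-summing at the origin,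
then `T` is `2`-fully `(q;p₁,…,p_{n−1},r)`-summing:
`∑_k ∑_j ‖T(x_k^{(1)},…,x_k^{(n−1)},y_j)‖^q < ∞`. -/
theorem two_fully_summing_of_summing
    {𝕜 : Type*} [RCLike 𝕜] {m : ℕ} (hm : 1 ≤ m) {E : Fin (m + 1) → Type*}
    [∀ i, NormedAddCommGroup (E i)] [∀ i, NormedSpace 𝕜 (E i)] [∀ i, CompleteSpace (E i)]
    {F : Type*} [NormedAddCommGroup F] [NormedSpace 𝕜 F] [CompleteSpace F]
    {q r : ℝ} (hq : 1 ≤ q) (hr : 0 < r)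
    (p : Fin m → ℝ≥0∞) (hp : ∀ l, 0 < p l)
    (C : ℝ) (hC : 0 < C)
    (hlin : ∀ u : E (Fin.last m) →L[𝕜] F, ∀ y : ℕ → E (Fin.last m),
      WeaklySummable 𝕜 r y →
        (Summable fun j => ‖u (y j)‖ ^ q) ∧
        ∀ B : ℝ, (∀ φ : E (Fin.last m) →L[𝕜] 𝕜, ‖φ‖ ≤ 1 →
            (∑' j, ‖φ (y j)‖ ^ r) ^ (1 / r) ≤ B) →
          (∑' j, ‖u (y j)‖ ^ q) ^ (1 / q) ≤ C * ‖u‖ * B)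
    (T : ContinuousMultilinearMap 𝕜 E F)
    (hT : ∀ x : ∀ l : Fin m, ℕ → E l.castSucc, (∀ l, MemWeakLp 𝕜 (p l) (x l)) →
      ∀ y : ℕ → E (Fin.last m), (∃ M : ℝ, ∀ j, ‖y j‖ ≤ M) →
        Summable fun j => ‖T (Fin.snoc (fun l => x l j) (y j))‖ ^ q) :
    ∀ x : ∀ l : Fin m, ℕ → E l.castSucc, (∀ l, MemWeakLp 𝕜 (p l) (x l)) →
      ∀ y : ℕ → E (Fin.last m), WeaklySummable 𝕜 r y →
        Summable fun kj : ℕ × ℕ =>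
          ‖T (Fin.snoc (fun l => x l kj.1) (y kj.2))‖ ^ q := by
  classical
  intro x hx y hy
  have hq0 : (0:ℝ) < q := lt_of_lt_of_le one_pos hq
  -- uniform weak bound for y
  obtain ⟨B, hB⟩ := exists_weak_bound (𝕜 := 𝕜) hr y hy
  have hB0 : 0 ≤ B := by
    have := hB 0 (by simp)
    simp only [ContinuousLinearMap.zero_apply, norm_zero,
      Real.zero_rpow hr.ne', tsum_zero] at this
    rwa [Real.zero_rpow (by positivity : (1:ℝ)/r ≠ 0)] at this
  -- the family of linear maps in the last variable
  set u : ℕ → E (Fin.last m) →L[𝕜] F := fun k =>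
    T.toContinuousLinearMap (Fin.snoc (fun l => x l k) 0) (Fin.last m) with hudef
  have hu : ∀ k z, u k z = T (Fin.snoc (fun l => x l k) z) := by
    intro k z
    show T (Function.update (Fin.snoc (fun l => x l k) (0 : E (Fin.last m)))
      (Fin.last m) z) = _
    rw [Fin.update_snoc_last]
  -- choose near-norming unit vectors
  have hz : ∀ k, ∃ z : E (Fin.last m), ‖z‖ ≤ 1 ∧ ‖u k‖ / 2 ≤ ‖u k z‖ := by
    intro k
    rcases eq_or_lt_of_le (norm_nonneg (u k)) with h | h
    · exact ⟨0, by simp, by simp [← h]⟩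
    · have h2 : ‖u k‖ / 2 < ‖u k‖ := by linarith
      obtain ⟨z, hz1, hz2⟩ := (u k).exists_lt_apply_of_lt_opNorm h2
      exact ⟨z, hz1.le, hz2.le⟩
  choose z hz1 hz2 using hz
  -- summability of ‖u k‖ ^ q
  have hTz := hT x hx z ⟨1, hz1⟩
  have hTz' : Summable fun k => ‖u k (z k)‖ ^ q := by
    simpa only [← hu] using hTz
  have hnormsum : Summable fun k => ‖u k‖ ^ q := by
    refine Summable.of_nonneg_of_le (fun k => Real.rpow_nonneg (norm_nonneg _) q)
      (fun k => ?_) (hTz'.mul_left ((2:ℝ) ^ q))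
    have hle : ‖u k‖ ≤ 2 * ‖u k (z k)‖ := by
      have := hz2 k; linarith
    calc ‖u k‖ ^ q ≤ (2 * ‖u k (z k)‖) ^ q :=
          Real.rpow_le_rpow (norm_nonneg _) hle hq0.le
      _ = 2 ^ q * ‖u k (z k)‖ ^ q := Real.mul_rpow (by norm_num) (norm_nonneg _)
  -- summability in each row, with uniform bound
  have hrow : ∀ k, Summable fun j => ‖u k (y j)‖ ^ q := fun k => (hlin (u k) y hy).1
  have hrowbound : ∀ k, ∑' j, ‖u k (y j)‖ ^ q ≤ (C * B) ^ q * ‖u k‖ ^ q := by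
    intro k
    have h1 := (hlin (u k) y hy).2 B hB
    have hnn : 0 ≤ ∑' j, ‖u k (y j)‖ ^ q :=
      tsum_nonneg fun j => Real.rpow_nonneg (norm_nonneg _) q
    have hRnn : 0 ≤ C * ‖u k‖ * B := by positivity
    have h2 : ((∑' j, ‖u k (y j)‖ ^ q) ^ (1 / q)) ^ q ≤ (C * ‖u k‖ * B) ^ q :=
      Real.rpow_le_rpow (Real.rpow_nonneg hnn _) h1 hq0.le
    rw [← Real.rpow_mul hnn, one_div_mul_cancel hq0.ne', Real.rpow_one] at h2
    calc ∑' j, ‖u k (y j)‖ ^ q ≤ (C * ‖u k‖ * B) ^ q := h2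
      _ = (C * B) ^ q * ‖u k‖ ^ q := by
          rw [show C * ‖u k‖ * B = (C * B) * ‖u k‖ by ring,
            Real.mul_rpow (by positivity) (norm_nonneg _)]
  -- conclude via the double-series criterion
  have hgoal : Summable fun kj : ℕ × ℕ => ‖u kj.1 (y kj.2)‖ ^ q := by
    rw [summable_prod_of_nonneg (fun kj => Real.rpow_nonneg (norm_nonneg _) q)]
    refine ⟨hrow, ?_⟩
    exact Summable.of_nonneg_of_le
      (fun k => tsum_nonneg fun j => Real.rpow_nonneg (norm_nonneg _) q)
      hrowbound (hnormsum.mul_left ((C * B) ^ q))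
  simpa only [hu] using hgoal
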